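/- Let L be a language over σ₂, let O be the family of σ-caterpillars described by the words of L, let O⁺ be the family of σ-caterpillars which contain homomorphic images of members of O (i.e., caterpillars T such that some member of O admits a homomorphism to T), and let L⁺ be the set of all σ₂-words describing members of O⁺. Then there exists a σ-structure A such that (O, A) is a homomorphism duality if and only if L⁺ is a regular language. -/

import Mathlib

/-! Basic framework: relational structures of a finite type `σ` with arities `ar`,
homomorphisms, the binary type/alphabet `σ₂`, the functors `β` and `β*`,
path structures `P_w`, nondeterministic acceptance, and caterpillar notions. -/

/-- A `σ`-structure: a finite universe together with an `ar R`-ary relation for each `R ∈ σ`. -/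
structure Str (σ : Type) (ar : σ → ℕ) : Type 1 where
  V : Type
  finiteV : Finite V
  rel : ∀ R : σ, Set ((Fin (ar R)) → V)

/-- The alphabet (and binary type) `σ₂`: a symbol `R^(i,j)` for each `R ∈ σ` of arity `k`
and each `(i,j) ∈ {1,…,k}²`. -/
abbrev Sig2 (σ : Type) (ar : σ → ℕ) : Type := Σ R : σ, Fin (ar R) × Fin (ar R)

/-- A `σ₂`-structure: a finite universe with a binary relation for each symbol of `σ₂`. -/
structure Str2 (σ : Type) (ar : σ → ℕ) : Type 1 where
  V : Type
  finiteV : Finite V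
  rel : Sig2 σ ar → Set (V × V)

variable {σ : Type} [Finite σ] {ar : σ → ℕ}

/-- Existence of a homomorphism between `σ`-structures. -/
def Str.Hom (A B : Str σ ar) : Prop :=
  ∃ f : A.V → B.V, ∀ (R : σ) (t : Fin (ar R) → A.V), t ∈ A.rel R → (fun i => f (t i)) ∈ B.rel R

/-- Existence of a homomorphism between `σ₂`-structures. -/
def Str2.Hom (X Y : Str2 σ ar) : Prop :=
  ∃ f : X.V → Y.V, ∀ (s : Sig2 σ ar) (p : X.V × X.V), p ∈ X.rel s → (f p.1, f p.2) ∈ Y.rel s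

/-- Isomorphism of `σ`-structures. -/
def Str.Iso (A B : Str σ ar) : Prop :=
  ∃ f : A.V ≃ B.V, ∀ (R : σ) (t : Fin (ar R) → A.V), t ∈ A.rel R ↔ (fun i => f (t i)) ∈ B.rel R

/-- The functor `β`: same universe, `(x_i, x_j) ∈ R^(i,j)(β B)` for each `(x_1,…,x_k) ∈ R(B)`. -/
def strBeta (B : Str σ ar) : Str2 σ ar where
  V := B.V
  finiteV := B.finiteV
  rel := fun s => { p | ∃ t ∈ B.rel s.1, t s.2.1 = p.1 ∧ t s.2.2 = p.2 }

/-- The carrier of `β*(X)⁺`: a copy of each element of `X` together with fresh elements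
`x_1, …, x_k` for each `(x,y) ∈ R^(i,j)(X)`. -/
abbrev PlusCarrier (X : Str2 σ ar) : Type :=
  X.V ⊕ Σ s : Sig2 σ ar, { p : X.V × X.V // p ∈ X.rel s } × Fin (ar s.1)

/-- The identifications generating `∼`: for `(x,y) ∈ R^(i,j)(X)`, identify `x_i` with `x`
and `x_j` with `y`. -/
inductive PreRel (X : Str2 σ ar) : PlusCarrier X → PlusCarrier X → Prop
  | left (s : Sig2 σ ar) (p : { p : X.V × X.V // p ∈ X.rel s }) :
      PreRel X (Sum.inr ⟨s, p, s.2.1⟩) (Sum.inl p.1.1)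
  | right (s : Sig2 σ ar) (p : { p : X.V × X.V // p ∈ X.rel s }) :
      PreRel X (Sum.inr ⟨s, p, s.2.2⟩) (Sum.inl p.1.2)

/-- The functor `β*`, left adjoint to `β`. -/
def strBetaStar (X : Str2 σ ar) : Str σ ar where
  V := Quot (PreRel X)
  finiteV := by
    have : Finite X.V := X.finiteV
    exact Finite.of_surjective (Quot.mk (PreRel X)) (fun q => Quot.exists_rep q)
  rel := fun R => { t | ∃ (i j : Fin (ar R)) (p : X.V × X.V) (hp : p ∈ X.rel ⟨R, (i, j)⟩),
      t = fun m => Quot.mk (PreRel X) (Sum.inr ⟨⟨R, (i, j)⟩, ⟨p, hp⟩, m⟩) }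

/-- The `σ₂`-path `P_w` of a word `w ∈ σ₂*`. -/
def PathStr (w : List (Sig2 σ ar)) : Str2 σ ar where
  V := Fin (w.length + 1)
  finiteV := inferInstance
  rel := fun s => { p | ∃ t : Fin w.length, w.get t = s ∧ p = (t.castSucc, t.succ) }

/-- Acceptance of the word `w` by the `σ₂`-structure `X` viewed as a nondeterministic
automaton with initial states `I` and terminal states `T`. -/
def NAccepts (X : Str2 σ ar) (I T : Set X.V) (w : List (Sig2 σ ar)) : Prop :=
  ∃ f : Fin (w.length + 1) → X.V,
    (∀ (s : Sig2 σ ar) (p : Fin (w.length + 1) × Fin (w.length + 1)),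
        p ∈ (PathStr w).rel s → (f p.1, f p.2) ∈ X.rel s) ∧
    f 0 ∈ I ∧ f (Fin.last w.length) ∈ T

/-! Caterpillars. -/

/-- The blocks (hyperedges) of a `σ`-structure. -/
def Str.Block (A : Str σ ar) : Type := Σ R : σ, { t : Fin (ar R) → A.V // t ∈ A.rel R }

/-- The underlying simple graph of the incidence multigraph `Inc(A)`. -/
def IncGraph (A : Str σ ar) : SimpleGraph (A.V ⊕ A.Block) :=
  SimpleGraph.fromRel (fun u v =>
    ∃ (b : A.Block) (i : Fin (ar b.1)), u = Sum.inl (b.2.1 i) ∧ v = Sum.inr b)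

/-- `a` is a leaf when it has degree one in `Inc(A)`, i.e. there is exactly one
incidence `(block, coordinate)` at `a`. -/
def Str.IsLeaf (A : Str σ ar) (a : A.V) : Prop :=
  Nat.card { e : Σ b : A.Block, Fin (ar b.1) // e.1.2.1 e.2 = a } = 1

/-- A block is pendant when it is incident to at most one non-leaf. -/
def Str.IsPendant (A : Str σ ar) (b : A.Block) : Prop :=
  Set.Subsingleton { a : A.V | ¬ A.IsLeaf a ∧ ∃ i, b.2.1 i = a }

/-- A `σ`-tree: the incidence multigraph is connected, has no cycles and no parallel edges. -/
def Str.IsTreeStr (A : Str σ ar) : Prop :=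
  (∀ b : A.Block, Function.Injective b.2.1) ∧ (IncGraph A).IsTree

/-- A `σ`-path: a `σ`-tree with at most two pendant blocks. -/
def Str.IsPathStr (A : Str σ ar) : Prop :=
  A.IsTreeStr ∧ Nat.card { b : A.Block // A.IsPendant b } ≤ 2

/-- The vertices removed when pruning: leaves attached to pendant blocks only. -/
def Str.Removed (A : Str σ ar) (a : A.V) : Prop :=
  A.IsLeaf a ∧ ∀ b : A.Block, (∃ i, b.2.1 i = a) → A.IsPendant b

/-- The structure obtained by removing all pendant blocks and the leaves attached to them. -/
def prune (A : Str σ ar) : Str σ ar where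
  V := { a : A.V // ¬ A.Removed a }
  finiteV := by have : Finite A.V := A.finiteV; exact inferInstance
  rel := fun R => { t | ∃ (t₀ : Fin (ar R) → A.V) (h₀ : t₀ ∈ A.rel R),
      ¬ A.IsPendant ⟨R, t₀, h₀⟩ ∧ ∀ i, (t i : A.V) = t₀ i }

/-- A `σ`-caterpillar: a `σ`-tree which is a path or becomes one after removing all
pendant blocks and the leaves attached to them. -/
def Str.IsCaterpillar (A : Str σ ar) : Prop :=
  A.IsTreeStr ∧ (A.IsPathStr ∨ (prune A).IsPathStr)

/-! Dualities. -/

/-- `(O, A)` is a homomorphism duality. -/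
def IsDuality (O : Set (Str σ ar)) (A : Str σ ar) : Prop :=
  ∀ B : Str σ ar, B.Hom A ↔ ∀ T ∈ O, ¬ T.Hom B

/-- `A` has caterpillar duality. -/
def HasCatDuality (A : Str σ ar) : Prop :=
  ∃ O : Set (Str σ ar), (∀ T ∈ O, T.IsCaterpillar) ∧ IsDuality O A

/-- `A` has path duality. -/
def HasPathDuality (A : Str σ ar) : Prop :=
  ∃ O : Set (Str σ ar), (∀ T ∈ O, T.IsPathStr) ∧ IsDuality O A

/-! The construction `Γ` on a deterministic automaton. -/

/-- The structure `Γ(D, {q₀}, T)`: universe is the set of subsets of `V(D)` containing `q₀`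
and disjoint from `T`; `(X_1,…,X_k) ∈ R(Γ D)` iff for all `(i,j)` and all `a ∈ X_i`,
every `b` with `(a,b) ∈ R^(i,j)(D)` lies in `X_j`. -/
def GammaStr (D : Str2 σ ar) (q0 : D.V) (T : Set D.V) : Str σ ar where
  V := { X : Set D.V // q0 ∈ X ∧ ∀ x ∈ X, x ∉ T }
  finiteV := by have : Finite D.V := D.finiteV; exact inferInstance
  rel := fun R => { t | ∀ (i j : Fin (ar R)) (a : D.V), a ∈ (t i).1 →
      ∀ b : D.V, (a, b) ∈ D.rel ⟨R, (i, j)⟩ → b ∈ (t j).1 }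

theorem test : True := trivial


/-! ### Auxiliary machinery -/

section Aux
set_option linter.unusedSectionVars false

variable {σ : Type} [Finite σ] {ar : σ → ℕ}

theorem Str.Hom.refl' (A : Str σ ar) : A.Hom A :=
  ⟨id, fun _ _ ht => ht⟩

theorem Str.Hom.comp' {A B C : Str σ ar} (h1 : A.Hom B) (h2 : B.Hom C) : A.Hom C := by
  obtain ⟨f, hf⟩ := h1; obtain ⟨g, hg⟩ := h2
  exact ⟨g ∘ f, fun R t ht => hg R (fun i => f (t i)) (hf R t ht)⟩

/-- Walks in a `σ₂`-structure labelled by words. -/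
inductive SWalk (Y : Str2 σ ar) : Y.V → List (Sig2 σ ar) → Y.V → Prop
  | nil (a : Y.V) : SWalk Y a [] a
  | cons {a b c : Y.V} {s : Sig2 σ ar} {w : List (Sig2 σ ar)} :
      (a, b) ∈ Y.rel s → SWalk Y b w c → SWalk Y a (s :: w) c

theorem SWalk.snoc {Y : Str2 σ ar} {a c d : Y.V} {w : List (Sig2 σ ar)} {s : Sig2 σ ar}
    (h : SWalk Y a w c) : (c, d) ∈ Y.rel s → SWalk Y a (w ++ [s]) d := by
  induction h with
  | nil a => exact fun hs => .cons hs (.nil d)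
  | cons h1 _ ih => exact fun hs => .cons h1 (ih hs)

theorem swalk_nil_iff {Y : Str2 σ ar} {a c : Y.V} : SWalk Y a [] c ↔ a = c := by
  constructor
  · intro h; cases h; rfl
  · rintro rfl; exact .nil a

theorem swalk_cons_iff {Y : Str2 σ ar} {a c : Y.V} {s : Sig2 σ ar} {w : List (Sig2 σ ar)} :
    SWalk Y a (s :: w) c ↔ ∃ b, (a, b) ∈ Y.rel s ∧ SWalk Y b w c := by
  constructor
  · intro h; cases h with | cons h1 h2 => exact ⟨_, h1, h2⟩
  · rintro ⟨b, h1, h2⟩; exact .cons h1 h2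

theorem swalk_of_fn {Y : Str2 σ ar} : ∀ (v : List (Sig2 σ ar)) (f : Fin (v.length + 1) → Y.V),
    (∀ t : Fin v.length, (f t.castSucc, f t.succ) ∈ Y.rel (v.get t)) →
    SWalk Y (f 0) v (f (Fin.last v.length))
  | [], f, _ => SWalk.nil (f 0)
  | s :: w, f, h => by
    have h0 : (f 0, f 1) ∈ Y.rel s := by simpa using h ⟨0, Nat.succ_pos _⟩
    have tail := swalk_of_fn w (fun i => f i.succ) (fun t => by
      have ht := h t.succ; rw [← Fin.succ_castSucc] at ht; simpa using ht)
    exact SWalk.cons h0 (by simpa [Fin.succ_last] using tail)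

theorem fn_of_swalk {Y : Str2 σ ar} {a c : Y.V} {v : List (Sig2 σ ar)} (h : SWalk Y a v c) :
    ∃ f : Fin (v.length + 1) → Y.V,
      (∀ t : Fin v.length, (f t.castSucc, f t.succ) ∈ Y.rel (v.get t)) ∧
      f 0 = a ∧ f (Fin.last v.length) = c := by
  induction h with
  | nil a => exact ⟨fun _ => a, fun t => t.elim0, rfl, rfl⟩
  | @cons a b c s w hab _ ih =>
    obtain ⟨g, hg, hg0, hgl⟩ := ih
    refine ⟨Fin.cases a g, ?_, by simp, ?_⟩
    · intro t
      induction t using Fin.cases with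
      | zero =>
        simp only [Fin.castSucc_zero, Fin.cases_zero, Fin.cases_succ, hg0]
        exact hab
      | succ t' => simpa [← Fin.succ_castSucc] using hg t'
    · simpa [← Fin.succ_last] using hgl

theorem hom_path_iff {Y : Str2 σ ar} {v : List (Sig2 σ ar)} :
    Str2.Hom (PathStr v) Y ↔ ∃ a c, SWalk Y a v c := by
  constructor
  · rintro ⟨f, hf⟩
    exact ⟨_, _,
      swalk_of_fn v f (fun t => hf (v.get t) (t.castSucc, t.succ) ⟨t, rfl, rfl⟩)⟩
  · rintro ⟨a, c, h⟩
    obtain ⟨f, hf, -, -⟩ := fn_of_swalk h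
    refine ⟨f, ?_⟩
    rintro s p ⟨t, rfl, rfl⟩
    exact hf t

/-- Adjunction, easy direction. -/
theorem hom_of_betaStar {X : Str2 σ ar} {B : Str σ ar} (h : (strBetaStar X).Hom B) :
    X.Hom (strBeta B) := by
  obtain ⟨g, hg⟩ := h
  refine ⟨fun x => g (Quot.mk _ (Sum.inl x)), ?_⟩
  rintro ⟨R, i, j⟩ p hp
  have hm : (fun m => Quot.mk (PreRel X) (Sum.inr ⟨⟨R, (i, j)⟩, ⟨p, hp⟩, m⟩))
      ∈ (strBetaStar X).rel R := ⟨i, j, p, hp, rfl⟩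
  refine ⟨_, hg R _ hm, ?_, ?_⟩
  · exact congrArg g (Quot.sound (PreRel.left ⟨R, (i, j)⟩ ⟨p, hp⟩))
  · exact congrArg g (Quot.sound (PreRel.right ⟨R, (i, j)⟩ ⟨p, hp⟩))

/-- Adjunction, other direction. -/
theorem betaStar_hom_of {X : Str2 σ ar} {B : Str σ ar} (h : X.Hom (strBeta B)) :
    (strBetaStar X).Hom B := by
  obtain ⟨f, hf⟩ := h
  have hf' : ∀ (s : Sig2 σ ar) (p : {p : X.V × X.V // p ∈ X.rel s}),
      ∃ t, t ∈ B.rel s.1 ∧ t s.2.1 = f p.1.1 ∧ t s.2.2 = f p.1.2 := by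
    intro s p
    have := hf s p.1 p.2
    exact this
  choose t ht h1 h2 using hf'
  have hc : ∀ u w, PreRel X u w →
      Sum.elim f (fun e : Σ s : Sig2 σ ar, {p : X.V × X.V // p ∈ X.rel s} × Fin (ar s.1) =>
        t e.1 e.2.1 e.2.2) u
      = Sum.elim f (fun e : Σ s : Sig2 σ ar, {p : X.V × X.V // p ∈ X.rel s} × Fin (ar s.1) =>
        t e.1 e.2.1 e.2.2) w := by
    intro u w hw
    cases hw with
    | left s p => exact h1 s p
    | right s p => exact h2 s p
  refine ⟨Quot.lift _ hc, ?_⟩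
  rintro R tup ⟨i, j, p, hp, rfl⟩
  exact ht ⟨R, (i, j)⟩ ⟨p, hp⟩

end Aux

/-- for `O` the family of caterpillars described by `L`, there exists `A`
such that `(O, A)` is a homomorphism duality if and only if `L⁺` is regular, where `L⁺`
is the set of words describing caterpillars containing homomorphic images of members of `O`. -/
theorem stmt_8 (σ : Type) [Finite σ] (ar : σ → ℕ) (L : Language (Sig2 σ ar)) :
    (∃ A : Str σ ar, ∀ B : Str σ ar,
        B.Hom A ↔ ∀ w ∈ L, ¬ (strBetaStar (PathStr w)).Hom B) ↔
    Language.IsRegular { v : List (Sig2 σ ar) |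
        ∃ w ∈ L, (strBetaStar (PathStr w)).Hom (strBetaStar (PathStr v)) } := by
  classical
  constructor
  · -- duality implies regularity
    rintro ⟨A, hA⟩
    haveI : Finite A.V := A.finiteV
    haveI : Fintype A.V := Fintype.ofFinite _
    set Y : Str2 σ ar := strBeta A with hYdef
    let M : DFA (Sig2 σ ar) (Set A.V) :=
      ⟨fun S s => {c | ∃ a ∈ S, (a, c) ∈ Y.rel s}, Set.univ, {S | ¬ S.Nonempty}⟩
    refine ⟨Set A.V, inferInstance, M, ?_⟩
    have key : ∀ (v : List (Sig2 σ ar)) (S : Set A.V),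
        M.evalFrom S v = {c | ∃ a ∈ S, SWalk Y a v c} := by
      intro v
      induction v with
      | nil =>
        intro S; ext c
        show c ∈ S ↔ ∃ a ∈ S, SWalk Y a [] c
        exact ⟨fun hc => ⟨c, hc, SWalk.nil (Y := Y) c⟩, fun ⟨a, ha, hw⟩ => by obtain rfl := swalk_nil_iff.mp hw; exact ha⟩
      | cons s w ih =>
        intro S
        have hstep : M.evalFrom S (s :: w) = M.evalFrom (M.step S s) w := rfl
        rw [hstep, ih]
        ext c
        show (∃ b ∈ M.step S s, SWalk Y b w c) ↔ ∃ a0 ∈ S, SWalk Y a0 (s :: w) c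
        refine Iff.trans ?_ (exists_congr fun _ => and_congr_right fun _ => swalk_cons_iff.symm)
        constructor
        · rintro ⟨b, ⟨a0, ha0, hrel⟩, hw⟩; exact ⟨a0, ha0, b, hrel, hw⟩
        · rintro ⟨a0, ha0, b, hrel, hw⟩; exact ⟨b, ⟨a0, ha0, hrel⟩, hw⟩
    ext v
    have e1 : v ∈ M.accepts ↔ ¬ (strBetaStar (PathStr v)).Hom A := by
      rw [DFA.mem_accepts]
      show M.evalFrom Set.univ v ∈ {S : Set A.V | ¬ S.Nonempty} ↔ _
      rw [Set.mem_setOf_eq, key]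
      constructor
      · intro hempty hhom
        obtain ⟨a, c, hw⟩ := hom_path_iff.mp (hom_of_betaStar hhom)
        exact hempty ⟨c, a, Set.mem_univ a, hw⟩
      · rintro hno ⟨c, a, -, hw⟩
        exact hno (betaStar_hom_of (hom_path_iff.mpr ⟨a, c, hw⟩))
    have e2 : ¬ (strBetaStar (PathStr v)).Hom A ↔
        ∃ w ∈ L, (strBetaStar (PathStr w)).Hom (strBetaStar (PathStr v)) := by
      rw [hA]
      push_neg
      rfl
    exact e1.trans e2
  · -- regularity implies duality
    rintro ⟨Q, fQ, M, hM⟩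
    haveI : Fintype Q := fQ
    let D2 : Str2 σ ar := ⟨Q, inferInstance, fun s => {p | M.step p.1 s = p.2}⟩
    refine ⟨GammaStr D2 M.start M.accept, fun B => ?_⟩
    constructor
    · rintro ⟨h, hh⟩ w hw hyp
      obtain ⟨a, c, hwalk⟩ := hom_path_iff.mp (hom_of_betaStar hyp)
      have keyA : ∀ {a c : (strBeta B).V} {u : List (Sig2 σ ar)}, SWalk (strBeta B) a u c →
          ∀ q ∈ (h a).1, M.evalFrom q u ∈ (h c).1 := by
        intro a c u hwalk
        induction hwalk with
        | nil a => exact fun q hq => hq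
        | @cons a b c s u hab hu ih =>
          intro q hq
          obtain ⟨R, i, j⟩ := s
          obtain ⟨tup, htup, h1, h2⟩ := hab
          have hmem := hh R tup htup
          have h1' : tup i = a := h1
          have h2' : tup j = b := h2
          have hst : M.step q ⟨R, (i, j)⟩ ∈ (h (tup j)).1 :=
            hmem i j q (by show q ∈ (h (tup i)).1; rw [h1']; exact hq) _ rfl
          exact ih (M.step q ⟨R, (i, j)⟩) (by rw [← h2']; exact hst)
      have hfin : M.evalFrom M.start w ∈ (h c).1 := keyA hwalk M.start (h a).2.1
      have hwL : w ∈ M.accepts := by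
        rw [hM]; exact ⟨w, hw, Str.Hom.refl' _⟩
      exact (h c).2.2 _ hfin (M.mem_accepts.mp hwL)
    · intro hB
      have hrej : ∀ v : List (Sig2 σ ar), Str2.Hom (PathStr v) (strBeta B) →
          M.evalFrom M.start v ∉ M.accept := by
        intro v hv hacc
        have hv' : v ∈ M.accepts := M.mem_accepts.mpr hacc
        rw [hM] at hv'
        obtain ⟨w, hw, hhom⟩ := hv'
        exact hB w hw (Str.Hom.comp' hhom (betaStar_hom_of hv))
      refine ⟨fun b => ⟨{q | ∃ (v : List (Sig2 σ ar)) (c : B.V),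
          SWalk (strBeta B) c v b ∧ M.evalFrom M.start v = q},
          ⟨[], b, SWalk.nil (Y := strBeta B) b, rfl⟩, ?_⟩, ?_⟩
      · rintro q ⟨v, c, hwalk, rfl⟩ hacc
        exact hrej v (hom_path_iff.mpr ⟨c, b, hwalk⟩) hacc
      · intro R tup htup
        refine fun i j q hq b' hstep => ?_
        obtain ⟨v, c, hwalk, rfl⟩ := hq
        refine ⟨v ++ [⟨R, (i, j)⟩], c, hwalk.snoc ⟨tup, htup, rfl, rfl⟩, ?_⟩
        rw [DFA.evalFrom_append_singleton]
        exact hstep
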